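/- Every (complex) root of the auxiliary polynomial A(z) = z^k - q z^{k-1} - q p z^{k-2} - ... - q p^{k-1} has absolute value strictly less than 1. -/

import Mathlib

open Finset

/-- Every complex root of the auxiliary polynomial has absolute value strictly less than 1. -/
theorem root_abs_lt_one (k : ℕ) (hk : 1 ≤ k) (p q : ℝ) (hp0 : 0 < p) (hp1 : p < 1)
    (hq : q = 1 - p) (lam : ℂ)
    (hroot : lam ^ k - ∑ i ∈ Finset.Icc 1 k, (q : ℂ) * (p : ℂ) ^ (i - 1) * lam ^ (k - i) = 0) :
    ‖lam‖ < 1 := by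
  by_contra h
  push_neg at h
  set r := ‖lam‖ with hr
  have hr1 : 1 ≤ r := h
  have hr0 : 0 < r := lt_of_lt_of_le zero_lt_one hr1
  have hq0 : 0 < q := by rw [hq]; linarith
  have heq : lam ^ k = ∑ i ∈ Finset.Icc 1 k, (q : ℂ) * (p : ℂ) ^ (i - 1) * lam ^ (k - i) :=
    sub_eq_zero.mp hroot
  have habs : r ^ k ≤ ∑ i ∈ Finset.Icc 1 k, q * p ^ (i - 1) * r ^ (k - i) := by
    calc r ^ k = ‖lam ^ k‖ := by rw [norm_pow]
      _ = ‖∑ i ∈ Finset.Icc 1 k, (q : ℂ) * (p : ℂ) ^ (i - 1) * lam ^ (k - i)‖ := by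
          rw [heq]
      _ ≤ ∑ i ∈ Finset.Icc 1 k,
            ‖(q : ℂ) * (p : ℂ) ^ (i - 1) * lam ^ (k - i)‖ :=
          norm_sum_le _ _
      _ = ∑ i ∈ Finset.Icc 1 k, q * p ^ (i - 1) * r ^ (k - i) := by
          refine Finset.sum_congr rfl fun i _ => ?_
          simp [norm_mul, norm_pow, Complex.norm_real, Real.norm_eq_abs, abs_of_pos hq0, abs_of_pos hp0, hr]
  have hbound : ∑ i ∈ Finset.Icc 1 k, q * p ^ (i - 1) * r ^ (k - i)
      ≤ ∑ i ∈ Finset.Icc 1 k, q * p ^ (i - 1) * r ^ (k - 1) := by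
    refine Finset.sum_le_sum fun i hi => ?_
    have hik : k - i ≤ k - 1 := by
      simp only [Finset.mem_Icc] at hi; omega
    have := pow_le_pow_right₀ hr1 hik
    have hpos : 0 < q * p ^ (i - 1) := by positivity
    nlinarith
  have hS : ∑ i ∈ Finset.Icc 1 k, q * p ^ (i - 1) = 1 - p ^ k := by
    rw [show Finset.Icc 1 k = Finset.Ico 1 (k+1) by rw [Finset.Ico_add_one_right_eq_Icc], Finset.sum_Ico_eq_sum_range]
    have : ∀ i, q * p ^ (1 + i - 1) = q * p ^ i := by intro i; congr 2; omega
    simp only [this]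
    rw [← Finset.mul_sum, geom_sum_eq (ne_of_lt hp1), hq]
    have : k + 1 - 1 = k := by omega
    rw [this]
    have hne : p - 1 ≠ 0 := by linarith
    field_simp
    ring
  have hsum : ∑ i ∈ Finset.Icc 1 k, q * p ^ (i - 1) * r ^ (k - 1)
      = (1 - p ^ k) * r ^ (k - 1) := by
    rw [← Finset.sum_mul, hS]
  have hpk : 0 < p ^ k := by positivity
  have hrk1 : 0 < r ^ (k - 1) := by positivity
  have hlt : r ^ k < r ^ (k - 1) := by
    calc r ^ k ≤ (1 - p ^ k) * r ^ (k - 1) := by rw [← hsum]; exact habs.trans hbound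
      _ < 1 * r ^ (k - 1) := by nlinarith
      _ = r ^ (k - 1) := one_mul _
  have hge : r ^ (k - 1) ≤ r ^ k := pow_le_pow_right₀ hr1 (by omega)
  linarith
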